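/- Fix r ∈ (0,1). For all α ∈ [0, π], the function f(α) = α − 2·arctan(r·sin α/(1 + r·cos α)) satisfies the lower bound f(α) ≥ ((1 − r)/(1 + r))·α. -/

import Mathlib

open Real

/-- For `r ∈ (0,1)` and `α ∈ [0,π]`,
`f(α) = α − 2 arctan(r sin α/(1 + r cos α)) ≥ ((1−r)/(1+r))·α`. -/
theorem larmor_arc_lower_bound (r : ℝ) (hr0 : 0 < r) (hr1 : r < 1)
    (f : ℝ → ℝ)
    (hf : ∀ α, f α = α - 2 * Real.arctan (r * Real.sin α / (1 + r * Real.cos α))) :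
    ∀ α ∈ Set.Icc (0 : ℝ) Real.pi, (1 - r) / (1 + r) * α ≤ f α := by
  set c : ℝ := (1 - r) / (1 + r) with hc
  set g : ℝ → ℝ := fun α => α - 2 * Real.arctan (r * Real.sin α / (1 + r * Real.cos α)) - c * α
    with hg
  -- derivative of g at any point
  have key : ∀ x : ℝ, HasDerivAt g
      (1 - 2 * (1 / (1 + (r * Real.sin x / (1 + r * Real.cos x)) ^ 2) *
        ((r * Real.cos x * (1 + r * Real.cos x) - r * Real.sin x * (r * -Real.sin x)) /
          (1 + r * Real.cos x) ^ 2)) - c * 1) x := by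
    intro x
    have hd1 : 0 < 1 + r * Real.cos x := by nlinarith [Real.neg_one_le_cos x]
    have hnum : HasDerivAt (fun α => r * Real.sin α) (r * Real.cos x) x :=
      (Real.hasDerivAt_sin x).const_mul r
    have hden : HasDerivAt (fun α => 1 + r * Real.cos α) (r * -Real.sin x) x :=
      (((Real.hasDerivAt_cos x).const_mul r)).const_add 1
    have hu := hnum.div hden (ne_of_gt hd1)
    have ha := hu.arctan
    exact ((hasDerivAt_id x).sub (ha.const_mul 2)).sub ((hasDerivAt_id x).const_mul c)
  have hderiv_nonneg : ∀ x : ℝ, 0 ≤ deriv g x := by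
    intro x
    rw [(key x).deriv]
    have hc1 : 0 < 1 + r * Real.cos x := by nlinarith [Real.neg_one_le_cos x]
    have hD : 0 < 1 + 2 * r * Real.cos x + r ^ 2 := by nlinarith [Real.neg_one_le_cos x]
    have hpy := Real.sin_sq_add_cos_sq x
    have h1r : 0 < 1 + r := by linarith
    rw [hc]
    have hcos := Real.cos_le_one x
    have e1 : r * Real.cos x * (1 + r * Real.cos x) - r * Real.sin x * (r * -Real.sin x)
        = r * (Real.cos x + r) := by linear_combination r ^ 2 * hpy
    have e2 : 1 + (r * Real.sin x / (1 + r * Real.cos x)) ^ 2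
        = (1 + 2 * r * Real.cos x + r ^ 2) / (1 + r * Real.cos x) ^ 2 := by
      field_simp
      linear_combination r ^ 2 * hpy
    have hinner : 1 / (1 + (r * Real.sin x / (1 + r * Real.cos x)) ^ 2) *
        ((r * Real.cos x * (1 + r * Real.cos x) - r * Real.sin x * (r * -Real.sin x)) /
          (1 + r * Real.cos x) ^ 2) = r * (Real.cos x + r) / (1 + 2 * r * Real.cos x + r ^ 2) := by
      rw [e1, e2]
      field_simp
    rw [hinner]
    have key2 : r * (Real.cos x + r) / (1 + 2 * r * Real.cos x + r ^ 2) ≤ r / (1 + r) := by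
      rw [div_le_div_iff₀ hD h1r]
      nlinarith [mul_nonneg (mul_nonneg hr0.le (sub_nonneg.2 hr1.le)) (sub_nonneg.2 hcos)]
    have heq : (1 - r) / (1 + r) = 1 - 2 * (r / (1 + r)) := by
      field_simp
      ring
    rw [heq]
    linarith
  have hmono : Monotone g :=
    monotone_of_deriv_nonneg (fun x => (key x).differentiableAt) hderiv_nonneg
  intro α hα
  have h0 : g 0 = 0 := by simp [hg]
  have := hmono hα.1
  rw [h0, hg] at this
  rw [hf]
  simp only at this
  linarith
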